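/- Let M = {m_1, …, m_k} be a nonempty finite subset of the Gromov–Hausdorff space 𝓜, put r = smt(M,𝓜) and d = max_i diam m_i, and let G = (V,E) be a tree on 𝓜 connecting M with |G| ≤ r + 1. Then every vertex v ∈ V satisfies diam v ≤ 2r + d + 2, i.e. V ⊆ 𝓜(2r + d + 2). -/

import Mathlib

/-- A (simple) graph on a set `X`: a finite vertex set `verts ⊆ X` together with a finite
set of edges, each edge being a 2-element subset of `verts`. -/
structure GraphOn (X : Type*) where
  verts : Finset X
  edges : Finset (Sym2 X)
  mem_verts_of_mem_edges : ∀ e ∈ edges, ∀ x ∈ e, x ∈ verts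
  not_isDiag : ∀ e ∈ edges, ¬ e.IsDiag

/-- Two points are adjacent in `G` if they form an edge of `G`. -/
def GraphOn.Adj {X : Type*} (G : GraphOn X) (x y : X) : Prop := s(x, y) ∈ G.edges

/-- A graph on `X` is connected if its vertex set is nonempty and any two of its vertices
are joined by a path of edges. -/
def GraphOn.IsConnected {X : Type*} (G : GraphOn X) : Prop :=
  G.verts.Nonempty ∧ ∀ x ∈ G.verts, ∀ y ∈ G.verts, Relation.ReflTransGen G.Adj x y

/-- A graph on `X` is acyclic if it contains no cycle, i.e. no injective circular sequence
of at least three vertices with consecutive members adjacent. -/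
def GraphOn.IsAcyclic {X : Type*} (G : GraphOn X) : Prop :=
  ¬ ∃ (k : ℕ) (v : ZMod k → X), 3 ≤ k ∧ Function.Injective v ∧ ∀ i, G.Adj (v i) (v (i + 1))

/-- A tree on `X` is a connected acyclic graph on `X`. -/
def GraphOn.IsTree {X : Type*} (G : GraphOn X) : Prop := G.IsConnected ∧ G.IsAcyclic

/-- The length of a graph on a metric space: the sum of the lengths (distances between
endpoints) of all its edges. -/
noncomputable def GraphOn.length {X : Type*} [MetricSpace X] (G : GraphOn X) : ℝ :=
  ∑ e ∈ G.edges, Sym2.lift ⟨fun x y => dist x y, fun _ _ => dist_comm _ _⟩ e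

/-- A graph `G` on `X` connects a finite set `M ⊆ X` if `G` is connected and all points of `M`
are vertices of `G`. -/
def GraphOn.Connects {X : Type*} (G : GraphOn X) (M : Finset X) : Prop :=
  G.IsConnected ∧ ∀ m ∈ M, m ∈ G.verts

/-- The length of a Steiner minimal tree on a finite subset `M` of a metric space `X`:
the infimum of lengths of connected graphs on `X` connecting `M`. -/
noncomputable def smt (X : Type*) [MetricSpace X] (M : Finset X) : ℝ :=
  sInf {l : ℝ | ∃ G : GraphOn X, G.Connects M ∧ l = G.length}

/-- Let `M` be a nonempty finite subset of the Gromov–Hausdorff space `𝓜`,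
`r = smt(M,𝓜)`, `d = max_{m ∈ M} diam m`, and let `G` be a tree on `𝓜` connecting `M`
with `|G| ≤ r + 1`. Then every vertex `v` of `G` satisfies `diam v ≤ 2r + d + 2`. -/
noncomputable def elen {X : Type*} [MetricSpace X] : Sym2 X → ℝ :=
  Sym2.lift ⟨fun x y => dist x y, fun _ _ => dist_comm _ _⟩

lemma elen_nonneg {X : Type*} [MetricSpace X] (e : Sym2 X) : 0 ≤ elen e := by
  induction e using Sym2.ind with
  | _ x y => simpa [elen] using dist_nonneg

/-- The associated simple graph on the vertex subtype. -/
def GraphOn.toSG {X : Type*} (G : GraphOn X) : SimpleGraph {x // x ∈ G.verts} where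
  Adj a b := s(a.1, b.1) ∈ G.edges
  symm := ⟨fun a b h => by show s(b.1, a.1) ∈ G.edges; rwa [Sym2.eq_swap]⟩
  loopless := ⟨fun a h => G.not_isDiag _ h (Sym2.mk_isDiag_iff.mpr rfl)⟩

lemma walk_dist_le {X : Type*} [MetricSpace X] (G : GraphOn X)
    {a b : {x // x ∈ G.verts}} (p : G.toSG.Walk a b) :
    dist a.1 b.1 ≤ ((p.edges.map (Sym2.map Subtype.val)).map elen).sum := by
  induction p with
  | nil => simp
  | cons h q ih =>
    rename_i u v w
    calc dist u.1 w.1 ≤ dist u.1 v.1 + dist v.1 w.1 := dist_triangle _ _ _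
    _ ≤ dist u.1 v.1 + ((q.edges.map (Sym2.map Subtype.val)).map elen).sum :=
        add_le_add_right ih _
    _ = ((((SimpleGraph.Walk.cons h q).edges.map (Sym2.map Subtype.val))).map elen).sum := by
        simp [SimpleGraph.Walk.edges_cons, Sym2.map_pair_eq, elen]

lemma dist_le_length {X : Type*} [MetricSpace X] (G : GraphOn X)
    {x y : X} (hx : x ∈ G.verts) (hy : y ∈ G.verts)
    (h : Relation.ReflTransGen G.Adj x y) : dist x y ≤ G.length := by
  classical
  -- lift to reachability in toSG
  have hreach : G.toSG.Reachable ⟨x, hx⟩ ⟨y, hy⟩ := by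
    induction h with
    | refl => exact SimpleGraph.Reachable.refl _
    | tail hab hbc ih =>
      rename_i b c
      have hb : b ∈ G.verts :=
        G.mem_verts_of_mem_edges _ hbc b (by simp [Sym2.mem_iff])
      have hc : c ∈ G.verts :=
        G.mem_verts_of_mem_edges _ hbc c (by simp [Sym2.mem_iff])
      exact (ih hb).trans (SimpleGraph.Adj.reachable (by exact hbc))
  obtain ⟨w⟩ := hreach
  set p := w.bypass with hp
  have hpath : p.IsPath := w.bypass_isPath
  have hnodup : (p.edges.map (Sym2.map Subtype.val)).Nodup :=
    hpath.isTrail.edges_nodup.map (Sym2.map.injective Subtype.val_injective)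
  have hsub : (p.edges.map (Sym2.map Subtype.val)).toFinset ⊆ G.edges := by
    intro e he
    rw [List.mem_toFinset, List.mem_map] at he
    obtain ⟨e', he', rfl⟩ := he
    have := p.edges_subset_edgeSet he'
    induction e' using Sym2.ind with
    | _ a b =>
      rw [SimpleGraph.mem_edgeSet] at this
      simpa [Sym2.map_pair_eq] using (show s(a.1, b.1) ∈ G.edges from this)
  calc dist x y ≤ ((p.edges.map (Sym2.map Subtype.val)).map elen).sum := walk_dist_le G p
    _ = ∑ e ∈ (p.edges.map (Sym2.map Subtype.val)).toFinset, elen e :=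
        (List.sum_toFinset _ hnodup).symm
    _ ≤ ∑ e ∈ G.edges, elen e := by
        refine Finset.sum_le_sum_of_subset_of_nonneg hsub fun e _ _ => elen_nonneg e
    _ = G.length := rfl

open Metric in
lemma diam_le_diam_add_two_hd {Z : Type*} [MetricSpace Z] {s t : Set Z}
    (hs : s.Nonempty) (ht : t.Nonempty) (bs : Bornology.IsBounded s) (bt : Bornology.IsBounded t)
    (hne : EMetric.hausdorffEdist s t ≠ ⊤) :
    diam s ≤ diam t + 2 * hausdorffDist s t := by
  have h0 : 0 ≤ diam t + 2 * hausdorffDist s t := by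
    have h1 : 0 ≤ hausdorffDist s t := hausdorffDist_nonneg
    have h2 : 0 ≤ diam t := diam_nonneg
    linarith
  refine diam_le_of_forall_dist_le h0 fun x hx y hy => ?_
  refine le_of_forall_pos_le_add fun ε hε => ?_
  have hlt : hausdorffDist s t < hausdorffDist s t + ε / 2 := by linarith
  obtain ⟨x', hx', hxx'⟩ := exists_dist_lt_of_hausdorffDist_lt hx hlt hne
  obtain ⟨y', hy', hyy'⟩ := exists_dist_lt_of_hausdorffDist_lt hy hlt hne
  have hx'y' : dist x' y' ≤ diam t := dist_le_diam_of_mem bt hx' hy'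
  calc dist x y ≤ dist x x' + dist x' y' + dist y' y := dist_triangle4 _ _ _ _
    _ ≤ (hausdorffDist s t + ε / 2) + diam t + (hausdorffDist s t + ε / 2) := by
        rw [dist_comm y' y]; exact add_le_add (add_le_add hxx'.le hx'y') hyy'.le
    _ = diam t + 2 * hausdorffDist s t + ε := by ring

open GromovHausdorff Metric in
lemma diam_rep_le (p q : GHSpace) :
    diam (Set.univ : Set p.Rep) ≤ diam (Set.univ : Set q.Rep) + 2 * dist p q := by
  obtain ⟨Φ, Ψ, hΦ, hΨ, hdist⟩ := ghDist_eq_hausdorffDist p.Rep q.Rep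
  rw [dist_ghDist, hdist]
  rw [← hΦ.diam_range, ← hΨ.diam_range]
  have bs : Bornology.IsBounded (Set.range Φ) := by
    rw [← Set.image_univ]; exact (isCompact_univ.image hΦ.continuous).isBounded
  have bt : Bornology.IsBounded (Set.range Ψ) := by
    rw [← Set.image_univ]; exact (isCompact_univ.image hΨ.continuous).isBounded
  exact diam_le_diam_add_two_hd (Set.range_nonempty _) (Set.range_nonempty _) bs bt
    (hausdorffEdist_ne_top_of_nonempty_of_bounded (Set.range_nonempty _)
      (Set.range_nonempty _) bs bt)

theorem diam_vertices_le (M : Finset GromovHausdorff.GHSpace) (hM : M.Nonempty)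
    (r d : ℝ)
    (hr : r = smt GromovHausdorff.GHSpace M)
    (hd : d = M.sup' hM fun m => Metric.diam (Set.univ : Set m.Rep))
    (G : GraphOn GromovHausdorff.GHSpace)
    (htree : G.IsTree) (hconn : G.Connects M)
    (hlen : G.length ≤ r + 1) :
    ∀ v ∈ G.verts, Metric.diam (Set.univ : Set v.Rep) ≤ 2 * r + d + 2 := by
  intro v hv
  obtain ⟨m, hm⟩ := hM
  have hmv : m ∈ G.verts := hconn.2 m hm
  have hpath := hconn.1.2 v hv m hmv
  have hdist : dist v m ≤ r + 1 := (dist_le_length G hv hmv hpath).trans hlen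
  have hdm : Metric.diam (Set.univ : Set m.Rep) ≤ d := by
    rw [hd]; exact Finset.le_sup' (fun m => Metric.diam (Set.univ : Set m.Rep)) hm
  have := diam_rep_le v m
  linarith
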